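/- Theorem (biorthogonal introduces no new values): if Φ ⊆ Λ_v is a set of values closed under (≡) (i.e. whenever v ∈ Φ, w is a value and v ≡ w, then w ∈ Φ), then Φ^⊥⊥ ∩ Λ_v = Φ. -/

import Mathlib

namespace CBV

/-! ## Syntax: values, terms, stacks, processes of the call-by-value λμ-calculus.
    λ-variables, μ-variables, term variables, labels and constructors are all
    represented by natural numbers. -/

mutual
  /-- Values: `x`, `λx.t`, `C[v]`, `{lᵢ = vᵢ}`. -/
  inductive Val : Type where
    | var : ℕ → Val                      -- λ-variable x
    | lam : ℕ → Trm → Val                -- λx.t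
    | cns : ℕ → Val → Val                -- C[v]
    | rcd : Flds → Val                   -- {lᵢ = vᵢ}
  /-- Record fields: a finite list of (label, value) pairs. -/
  inductive Flds : Type where
    | nil : Flds
    | cons : ℕ → Val → Flds → Flds
  /-- Terms: `a`, `v`, `t u`, `μα.t`, `p`, `v.l`, `case_v [Cᵢ[xᵢ] → tᵢ]`, `δ_{v,w}`. -/
  inductive Trm : Type where
    | tvar : ℕ → Trm                     -- term variable a
    | val : Val → Trm
    | app : Trm → Trm → Trm
    | mu : ℕ → Trm → Trm                 -- μα.t
    | prc : Proc → Trm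
    | prj : Val → ℕ → Trm                -- v.l
    | cse : Val → Brs → Trm              -- case_v [...]
    | dlt : Val → Val → Trm              -- δ_{v,w}
  /-- Case branches: a finite list of (constructor, bound λ-variable, body). -/
  inductive Brs : Type where
    | nil : Brs
    | cons : ℕ → ℕ → Trm → Brs → Brs
  /-- Stacks: `α`, `v.π`, `[t]π`. -/
  inductive Stk : Type where
    | svar : ℕ → Stk                     -- stack (μ-)variable α
    | push : Val → Stk → Stk             -- v.π
    | frame : Trm → Stk → Stk            -- [t]π
  /-- Processes: `t ∗ π`. -/
  inductive Proc : Type where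
    | mk : Trm → Stk → Proc
end

/-- Lookup of a label in a record. -/
def Flds.lookup : Flds → ℕ → Option Val
  | .nil, _ => none
  | .cons l v fs, k => if l = k then some v else fs.lookup k

/-- Lookup of a constructor among case branches, returning the bound variable and body. -/
def Brs.lookup : Brs → ℕ → Option (ℕ × Trm)
  | .nil, _ => none
  | .cons c x t bs, k => if c = k then some (x, t) else bs.lookup k

/-- A substitution maps λ-variables to values, μ-variables to stacks and
    term variables to terms (totally; the identity outside its support). -/
structure Subst : Type where
  lamS : ℕ → Val
  muS  : ℕ → Stk
  trmS : ℕ → Trm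

/-- The identity substitution. -/
def Subst.id : Subst := ⟨Val.var, Stk.svar, Trm.tvar⟩

/-- The substitution [x := v] of a single λ-variable. -/
def subst1Lam (x : ℕ) (v : Val) : Subst :=
  { Subst.id with lamS := Function.update Val.var x v }

/-- The substitution [α := π] of a single μ-variable. -/
def subst1Mu (α : ℕ) (π : Stk) : Subst :=
  { Subst.id with muS := Function.update Stk.svar α π }

/-- The substitution [a := t] of a single term variable. -/
def subst1Trm (a : ℕ) (t : Trm) : Subst :=
  { Subst.id with trmS := Function.update Trm.tvar a t }

/-- Remove a λ-variable from the support of a substitution (used under binders). -/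
def Subst.skipLam (σ : Subst) (x : ℕ) : Subst :=
  { σ with lamS := Function.update σ.lamS x (Val.var x) }

/-- Remove a μ-variable from the support of a substitution (used under binders). -/
def Subst.skipMu (σ : Subst) (α : ℕ) : Subst :=
  { σ with muS := Function.update σ.muS α (Stk.svar α) }

mutual
  /-- Application of a substitution to a value. -/
  def substVal (σ : Subst) : Val → Val
    | .var x => σ.lamS x
    | .lam x t => .lam x (substTrm (σ.skipLam x) t)
    | .cns c v => .cns c (substVal σ v)
    | .rcd fs => .rcd (substFlds σ fs)
  /-- Application of a substitution to record fields. -/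
  def substFlds (σ : Subst) : Flds → Flds
    | .nil => .nil
    | .cons l v fs => .cons l (substVal σ v) (substFlds σ fs)
  /-- Application of a substitution to a term. -/
  def substTrm (σ : Subst) : Trm → Trm
    | .tvar a => σ.trmS a
    | .val v => .val (substVal σ v)
    | .app t u => .app (substTrm σ t) (substTrm σ u)
    | .mu α t => .mu α (substTrm (σ.skipMu α) t)
    | .prc p => .prc (substPrc σ p)
    | .prj v l => .prj (substVal σ v) l
    | .cse v bs => .cse (substVal σ v) (substBrs σ bs)
    | .dlt v w => .dlt (substVal σ v) (substVal σ w)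
  /-- Application of a substitution to case branches. -/
  def substBrs (σ : Subst) : Brs → Brs
    | .nil => .nil
    | .cons c x t bs => .cons c x (substTrm (σ.skipLam x) t) (substBrs σ bs)
  /-- Application of a substitution to a stack. -/
  def substStk (σ : Subst) : Stk → Stk
    | .svar α => σ.muS α
    | .push v π => .push (substVal σ v) (substStk σ π)
    | .frame t π => .frame (substTrm σ t) (substStk σ π)
  /-- Application of a substitution to a process. -/
  def substPrc (σ : Subst) : Proc → Proc
    | .mk t π => .mk (substTrm σ t) (substStk σ π)
end

/-! ## The reduction relation (≻). -/

/-- The reduction relation (≻) of the Krivine abstract machine. -/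
inductive Red : Proc → Proc → Prop where
  | app (t u : Trm) (π : Stk) :
      Red (.mk (.app t u) π) (.mk u (.frame t π))
  | frame (v : Val) (t : Trm) (π : Stk) :
      Red (.mk (.val v) (.frame t π)) (.mk t (.push v π))
  | beta (x : ℕ) (t : Trm) (v : Val) (π : Stk) :
      Red (.mk (.val (.lam x t)) (.push v π)) (.mk (substTrm (subst1Lam x v) t) π)
  | mu (α : ℕ) (t : Trm) (π : Stk) :
      Red (.mk (.mu α t) π) (.mk (substTrm (subst1Mu α π) t) π)
  | prc (p : Proc) (π : Stk) :
      Red (.mk (.prc p) π) p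
  | prj (fs : Flds) (l : ℕ) (v : Val) (π : Stk) :
      fs.lookup l = some v →
      Red (.mk (.prj (.rcd fs) l) π) (.mk (.val v) π)
  | cse (c : ℕ) (v : Val) (bs : Brs) (x : ℕ) (t : Trm) (π : Stk) :
      bs.lookup c = some (x, t) →
      Red (.mk (.cse (.cns c v) bs) π) (.mk (substTrm (subst1Lam x v) t) π)

/-- k-fold application of a relation. -/
def iterRel (R : Proc → Proc → Prop) : ℕ → Proc → Proc → Prop
  | 0 => Eq
  | k + 1 => fun p r => ∃ q, R p q ∧ iterRel R k q r

/-- A process is final if it is of the form `v ∗ α`. -/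
def Final (p : Proc) : Prop :=
  ∃ (v : Val) (α : ℕ), p = .mk (.val v) (.svar α)

/-- A process is δ-like if it is of the form `δ_{v,w} ∗ π`. -/
def DeltaLike (p : Proc) : Prop :=
  ∃ (v w : Val) (π : Stk), p = .mk (.dlt v w) π

/-- A process is blocked if it has no (≻)-reduct. -/
def Blocked (p : Proc) : Prop := ¬ ∃ q, Red p q

/-- A process is stuck if it is neither final nor δ-like, and all its
    substitution instances are blocked. -/
def Stuck (p : Proc) : Prop :=
  ¬ Final p ∧ ¬ DeltaLike p ∧ ∀ σ : Subst, Blocked (substPrc σ p)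

/-- A process is non-terminating if it reaches no blocked process. -/
def NonTerminating (p : Proc) : Prop :=
  ¬ ∃ q, Relation.ReflTransGen Red p q ∧ Blocked q

/-- `p ⇓_R`: the process `p` converges for the reduction relation `R`,
    i.e. it `R`-reduces to a final process. -/
def ConvergesIn (R : Proc → Proc → Prop) (p : Proc) : Prop :=
  ∃ q, Relation.ReflTransGen R p q ∧ Final q

/-- The indexed reduction relation (↪ᵢ) = (≻) ∪ {(δ_{v,w} ∗ π, v ∗ π) | ∃ j < i, v ≢ⱼ w}.
    (The condition `v ≢ⱼ w` is inlined; it coincides with `¬ EquivI j v w` below.) -/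
def RedI : ℕ → Proc → Proc → Prop
  | i => fun p q =>
      Red p q ∨
      ∃ (v w : Val) (π : Stk), p = .mk (.dlt v w) π ∧ q = .mk (.val v) π ∧
        ∃ j, ∃ _ : j < i,
          ¬ (∀ k, ∀ _ : k ≤ j, ∀ (π' : Stk) (σ : Subst),
              ConvergesIn (RedI k) (.mk (substTrm σ (.val v)) π') ↔
              ConvergesIn (RedI k) (.mk (substTrm σ (.val w)) π'))
  termination_by i => i
  decreasing_by omega

/-- The indexed observational equivalence (≡ᵢ). -/
def EquivI (i : ℕ) (t u : Trm) : Prop :=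
  ∀ j, j ≤ i → ∀ (π : Stk) (σ : Subst),
    ConvergesIn (RedI j) (.mk (substTrm σ t) π) ↔
    ConvergesIn (RedI j) (.mk (substTrm σ u) π)

/-- The reduction relation (↪) = ∪ᵢ (↪ᵢ). -/
def RedFull (p q : Proc) : Prop := ∃ i, RedI i p q

/-- Observational equivalence (≡) = ∩ᵢ (≡ᵢ). -/
def Equiv (t u : Trm) : Prop := ∀ i, EquivI i t u

/-! ## The pole and orthogonality. -/

/-- The pole ⫫ = {p | p ⇓_↪}. -/
def Pole : Set Proc := {p | ConvergesIn RedFull p}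

/-- Orthogonal of a set of values: φ^⊥ = {π | ∀ v ∈ φ, v ∗ π ∈ ⫫}. -/
def orth (φ : Set Val) : Set Stk :=
  {π | ∀ v ∈ φ, Proc.mk (.val v) π ∈ Pole}

/-- Bi-orthogonal of a set of values: φ^⊥⊥ = {t | ∀ π ∈ φ^⊥, t ∗ π ∈ ⫫}. -/
def biorth (φ : Set Val) : Set Trm :=
  {t | ∀ π ∈ orth φ, Proc.mk t π ∈ Pole}

/-! ## Free variables and closedness. -/

/-- The kinds of variables: λ-variables, μ-variables, term variables,
    predicate variables. -/
inductive VKind : Type where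
  | lam | mu | trm | prd
deriving DecidableEq

mutual
  /-- Free variables (of every kind) of a value. -/
  def fvVal : Val → Set (VKind × ℕ)
    | .var x => {(VKind.lam, x)}
    | .lam x t => fvTrm t \ {(VKind.lam, x)}
    | .cns _ v => fvVal v
    | .rcd fs => fvFlds fs
  /-- Free variables of record fields. -/
  def fvFlds : Flds → Set (VKind × ℕ)
    | .nil => ∅
    | .cons _ v fs => fvVal v ∪ fvFlds fs
  /-- Free variables of a term. -/
  def fvTrm : Trm → Set (VKind × ℕ)
    | .tvar a => {(VKind.trm, a)}
    | .val v => fvVal v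
    | .app t u => fvTrm t ∪ fvTrm u
    | .mu α t => fvTrm t \ {(VKind.mu, α)}
    | .prc p => fvPrc p
    | .prj v _ => fvVal v
    | .cse v bs => fvVal v ∪ fvBrs bs
    | .dlt v w => fvVal v ∪ fvVal w
  /-- Free variables of case branches. -/
  def fvBrs : Brs → Set (VKind × ℕ)
    | .nil => ∅
    | .cons _ x t bs => (fvTrm t \ {(VKind.lam, x)}) ∪ fvBrs bs
  /-- Free variables of a stack. -/
  def fvStk : Stk → Set (VKind × ℕ)
    | .svar α => {(VKind.mu, α)}
    | .push v π => fvVal v ∪ fvStk π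
    | .frame t π => fvTrm t ∪ fvStk π
  /-- Free variables of a process. -/
  def fvPrc : Proc → Set (VKind × ℕ)
    | .mk t π => fvTrm t ∪ fvStk π
end

/-- A term is closed if it contains no free variable of any kind. -/
def ClosedTrm (t : Trm) : Prop := fvTrm t = ∅

end CBV

namespace CBV

/-! ### Auxiliary: a bound on all λ-variable indices occurring in a syntactic object. -/

mutual
  def bndVal : Val → ℕ
    | .var x => x
    | .lam x t => max x (bndTrm t)
    | .cns _ v => bndVal v
    | .rcd fs => bndFlds fs
  def bndFlds : Flds → ℕ
    | .nil => 0
    | .cons _ v fs => max (bndVal v) (bndFlds fs)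
  def bndTrm : Trm → ℕ
    | .tvar _ => 0
    | .val v => bndVal v
    | .app t u => max (bndTrm t) (bndTrm u)
    | .mu _ t => bndTrm t
    | .prc p => bndPrc p
    | .prj v _ => bndVal v
    | .cse v bs => max (bndVal v) (bndBrs bs)
    | .dlt v w => max (bndVal v) (bndVal w)
  def bndBrs : Brs → ℕ
    | .nil => 0
    | .cons _ x t bs => max (max x (bndTrm t)) (bndBrs bs)
  def bndStk : Stk → ℕ
    | .svar _ => 0
    | .push v π => max (bndVal v) (bndStk π)
    | .frame t π => max (bndTrm t) (bndStk π)
  def bndPrc : Proc → ℕ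
    | .mk t π => max (bndTrm t) (bndStk π)
end

/-- A substitution is inert for a bound `N` if it is the identity on μ- and
    term variables and on all λ-variables `≤ N`. -/
def Inert (σ : Subst) (N : ℕ) : Prop :=
  σ.muS = Stk.svar ∧ σ.trmS = Trm.tvar ∧ ∀ y ≤ N, σ.lamS y = Val.var y

theorem Inert.mono {σ : Subst} {N M : ℕ} (h : Inert σ M) (hNM : N ≤ M) : Inert σ N :=
  ⟨h.1, h.2.1, fun y hy => h.2.2 y (le_trans hy hNM)⟩

theorem Inert.skipLam {σ : Subst} {N : ℕ} (h : Inert σ (max x N)) :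
    Inert (σ.skipLam x) N := by
  refine ⟨h.1, h.2.1, fun y hy => ?_⟩
  by_cases hxy : y = x
  · subst hxy; simp [Subst.skipLam]
  · simp [Subst.skipLam, Function.update_of_ne hxy,
      h.2.2 y (le_trans hy (le_max_right _ _))]

theorem Inert.skipMu {σ : Subst} {N : ℕ} (h : Inert σ N) (α : ℕ) :
    Inert (σ.skipMu α) N := by
  refine ⟨?_, h.2.1, h.2.2⟩
  simp [Subst.skipMu, h.1]

mutual
theorem substVal_inert : ∀ (v : Val) (σ : Subst), Inert σ (bndVal v) → substVal σ v = v
  | .var x, σ, h => by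
      simpa [substVal] using h.2.2 x le_rfl
  | .lam x t, σ, h => by
      simp only [substVal]
      rw [substTrm_inert t _ (Inert.skipLam (by simpa [bndVal] using h))]
  | .cns c v, σ, h => by
      simp only [substVal]
      rw [substVal_inert v σ (by simpa [bndVal] using h)]
  | .rcd fs, σ, h => by
      simp only [substVal]
      rw [substFlds_inert fs σ (by simpa [bndVal] using h)]
theorem substFlds_inert : ∀ (fs : Flds) (σ : Subst), Inert σ (bndFlds fs) → substFlds σ fs = fs
  | .nil, σ, _ => rfl
  | .cons l v fs, σ, h => by
      simp only [substFlds]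
      rw [substVal_inert v σ (h.mono (by simp [bndFlds])),
          substFlds_inert fs σ (h.mono (by simp [bndFlds]))]
theorem substTrm_inert : ∀ (t : Trm) (σ : Subst), Inert σ (bndTrm t) → substTrm σ t = t
  | .tvar a, σ, h => by simp [substTrm, h.2.1]
  | .val v, σ, h => by
      simp only [substTrm]
      rw [substVal_inert v σ (by simpa [bndTrm] using h)]
  | .app t u, σ, h => by
      simp only [substTrm]
      rw [substTrm_inert t σ (h.mono (by simp [bndTrm])),
          substTrm_inert u σ (h.mono (by simp [bndTrm]))]
  | .mu α t, σ, h => by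
      simp only [substTrm]
      rw [substTrm_inert t _ ((by simpa [bndTrm] using h : Inert σ (bndTrm t)).skipMu α)]
  | .prc p, σ, h => by
      simp only [substTrm]
      rw [substPrc_inert p σ (by simpa [bndTrm] using h)]
  | .prj v l, σ, h => by
      simp only [substTrm]
      rw [substVal_inert v σ (by simpa [bndTrm] using h)]
  | .cse v bs, σ, h => by
      simp only [substTrm]
      rw [substVal_inert v σ (h.mono (by simp [bndTrm])),
          substBrs_inert bs σ (h.mono (by simp [bndTrm]))]
  | .dlt v w, σ, h => by
      simp only [substTrm]
      rw [substVal_inert v σ (h.mono (by simp [bndTrm])),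
          substVal_inert w σ (h.mono (by simp [bndTrm]))]
theorem substBrs_inert : ∀ (bs : Brs) (σ : Subst), Inert σ (bndBrs bs) → substBrs σ bs = bs
  | .nil, σ, _ => rfl
  | .cons c x t bs, σ, h => by
      simp only [substBrs]
      rw [substTrm_inert t _ (Inert.skipLam (h.mono (by simp [bndBrs]; omega))),
          substBrs_inert bs σ (h.mono (by simp [bndBrs]))]
theorem substStk_inert : ∀ (π : Stk) (σ : Subst), Inert σ (bndStk π) → substStk σ π = π
  | .svar α, σ, h => by simp [substStk, h.1]
  | .push v π, σ, h => by
      simp only [substStk]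
      rw [substVal_inert v σ (h.mono (by simp [bndStk])),
          substStk_inert π σ (h.mono (by simp [bndStk]))]
  | .frame t π, σ, h => by
      simp only [substStk]
      rw [substTrm_inert t σ (h.mono (by simp [bndStk])),
          substStk_inert π σ (h.mono (by simp [bndStk]))]
theorem substPrc_inert : ∀ (p : Proc) (σ : Subst), Inert σ (bndPrc p) → substPrc σ p = p
  | .mk t π, σ, h => by
      simp only [substPrc]
      rw [substTrm_inert t σ (h.mono (by simp [bndPrc])),
          substStk_inert π σ (h.mono (by simp [bndPrc]))]
end

/-! ### Auxiliary: deterministic steps and inversion for `RedFull`. -/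

theorem redFull_of_red {p q : Proc} (h : Red p q) : RedFull p q := ⟨0, by rw [RedI]; exact Or.inl h⟩

theorem redFull_dlt {v w : Val} (π : Stk) {i : ℕ} (h : ¬ EquivI i (.val v) (.val w)) :
    RedFull (.mk (.dlt v w) π) (.mk (.val v) π) := by
  refine ⟨i + 1, ?_⟩
  rw [RedI]
  exact Or.inr ⟨v, w, π, rfl, rfl, i, Nat.lt_succ_self i, h⟩

theorem redI_val_frame {i : ℕ} {v : Val} {t : Trm} {π : Stk} {q : Proc}
    (h : RedI i (.mk (.val v) (.frame t π)) q) : q = .mk t (.push v π) := by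
  rw [RedI] at h
  rcases h with h | ⟨a, b, ρ, heq, _, _⟩
  · cases h; rfl
  · simp at heq

theorem redI_beta {i x : ℕ} {t : Trm} {v : Val} {π : Stk} {q : Proc}
    (h : RedI i (.mk (.val (.lam x t)) (.push v π)) q) :
    q = .mk (substTrm (subst1Lam x v) t) π := by
  rw [RedI] at h
  rcases h with h | ⟨a, b, ρ, heq, _, _⟩
  · cases h; rfl
  · simp at heq

theorem redI_dlt_self_blocked {i : ℕ} {v : Val} {π : Stk} {q : Proc}
    (h : RedI i (.mk (.dlt v v) π) q) : False := by
  rw [RedI] at h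
  rcases h with h | ⟨a, b, ρ, heq, _, j, _, hne⟩
  · cases h
  · obtain ⟨h1, h2⟩ := Proc.mk.inj heq
    obtain ⟨h3, h4⟩ := Trm.dlt.inj h1
    subst h3; subst h4
    exact hne fun k hk π' σ => Iff.rfl

/-- Theorem 4: the biorthogonal introduces no new values:
    if Φ is closed under (≡) then Φ^⊥⊥ ∩ Λ_v = Φ. -/
theorem biorth_no_new_values (Φ : Set Val)
    (hcl : ∀ v ∈ Φ, ∀ w : Val, Equiv (.val v) (.val w) → w ∈ Φ) :
    {v : Val | Trm.val v ∈ biorth Φ} = Φ := by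
  ext v
  simp only [Set.mem_setOf_eq]
  constructor
  · intro hv
    by_contra hvΦ
    set x : ℕ := bndVal v + 1 with hx
    set body : Trm := .dlt (.var x) v with hbody
    set π₀ : Stk := .frame (.val (.lam x body)) (.svar 0) with hπ₀
    have hinert : ∀ w : Val, Inert (subst1Lam x w) (bndVal v) := by
      intro w
      refine ⟨rfl, rfl, fun y hy => ?_⟩
      have : y ≠ x := by omega
      simp [subst1Lam, Function.update_of_ne this, Subst.id]
    have hsub : ∀ w : Val, substTrm (subst1Lam x w) body = .dlt w v := by
      intro w
      simp only [hbody, substTrm, substVal]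
      rw [substVal_inert v _ (hinert w)]
      simp [subst1Lam]
    have hπ₀mem : π₀ ∈ orth Φ := by
      intro w hw
      have hne : ¬ Equiv (.val w) (.val v) := fun he => hvΦ (hcl w hw v he)
      obtain ⟨i, hi⟩ := not_forall.mp hne
      refine ⟨.mk (.val w) (.svar 0), ?_, ⟨w, 0, rfl⟩⟩
      refine Relation.ReflTransGen.head
        (redFull_of_red (Red.frame w (.val (.lam x body)) (.svar 0))) ?_
      refine Relation.ReflTransGen.head ?_
        (Relation.ReflTransGen.single (redFull_dlt (.svar 0) hi))
      have hβ := Red.beta x body w (.svar 0)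
      rw [hsub w] at hβ
      exact redFull_of_red hβ
    have hpole := hv π₀ hπ₀mem
    obtain ⟨q, hq, hfq⟩ := hpole
    rcases hq.cases_head with heq | ⟨p1, ⟨i1, h1⟩, hq1⟩
    · obtain ⟨v', α, h⟩ := hfq
      rw [← heq] at h
      simp [hπ₀] at h
    · have hp1 := redI_val_frame h1
      subst hp1
      rcases hq1.cases_head with heq | ⟨p2, ⟨i2, h2⟩, hq2⟩
      · obtain ⟨v', α, h⟩ := hfq
        rw [← heq] at h
        simp at h
      · have hp2 := redI_beta h2
        rw [hsub v] at hp2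
        subst hp2
        rcases hq2.cases_head with heq | ⟨p3, ⟨i3, h3⟩, _⟩
        · obtain ⟨v', α, h⟩ := hfq
          rw [← heq] at h
          simp at h
        · exact redI_dlt_self_blocked h3
  · intro hv π hπ
    exact hπ v hv

end CBV
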